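/- Combining the previous bounds: for n ≥ 1 and ω_n = 2π F_n > 0, SNR_n < SNR_max · e^{-(2n - 2π e F_n R/c)}. Consequently, if SNR_n ≥ γ then F_n ≥ n c/(e π R) + (c/(2 e π R)) log(γ/SNR_max). -/

import Mathlib

open Real

/-- `(n/e)^n ≤ n!` -/
lemma pow_div_exp_le_factorial (n : ℕ) : ((n : ℝ) / Real.exp 1) ^ n ≤ n.factorial := by
  have h1 : (n : ℝ) ^ n / n.factorial ≤ Real.exp n := by
    calc (n : ℝ) ^ n / n.factorial
        ≤ ∑ i ∈ Finset.range (n + 1), (n : ℝ) ^ i / i.factorial := by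
          refine Finset.single_le_sum (f := fun i => (n : ℝ) ^ i / i.factorial) ?_ ?_
          · intro i _
            positivity
          · simp
      _ ≤ Real.exp n := Real.sum_le_exp_of_nonneg (by positivity) _
  have hfac : (0 : ℝ) < n.factorial := by exact_mod_cast n.factorial_pos
  have h2 : (n : ℝ) ^ n ≤ n.factorial * Real.exp n := by
    rw [div_le_iff₀ hfac] at h1; linarith
  rw [div_pow]
  rw [div_le_iff₀ (by positivity)]
  rw [Real.exp_one_pow]
  exact h2

/-- Chained SNR bound and the resulting critical-frequency condition: if
`SNR_n ≤ SNR_max (2π F_n R/(2c))^{2n}/((2n+1)(n!)²)` with `n ≥ 1`, then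
`SNR_n < SNR_max e^{-(2n - 2π e F_n R/c)}`, and consequently `SNR_n ≥ γ` forces
`F_n ≥ n c/(eπR) + (c/(2eπR)) log(γ/SNR_max)`. -/
theorem snr_chain_and_critical_frequency (n : ℕ) (hn : 1 ≤ n)
    (R c Fn SNRmax snrn : ℝ) (hR : 0 < R) (hc : 0 < c) (hF : 0 < Fn) (hS : 0 < SNRmax)
    (hbound : snrn ≤ SNRmax * ((2 * Real.pi * Fn) * R / (2 * c)) ^ (2 * n) /
        ((2 * n + 1) * (n.factorial : ℝ) ^ 2)) :
    snrn < SNRmax * Real.exp (-(2 * n - 2 * Real.pi * Real.exp 1 * Fn * R / c)) ∧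
    ∀ γ : ℝ, 0 < γ → γ ≤ snrn →
      Fn ≥ n * c / (Real.exp 1 * Real.pi * R) +
        c / (2 * Real.exp 1 * Real.pi * R) * Real.log (γ / SNRmax) := by
  have hpi := Real.pi_pos
  have he : (0:ℝ) < Real.exp 1 := Real.exp_pos 1
  set z : ℝ := 2 * Real.pi * Fn * R / c with hz
  have hzpos : 0 < z := by positivity
  have hn1 : (1:ℝ) ≤ (n:ℝ) := by exact_mod_cast hn
  have hnpos : (0:ℝ) < n := by linarith
  -- key analytic inequality
  have key : ((2 * Real.pi * Fn) * R / (2 * c)) ^ (2 * n) /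
      ((2 * n + 1) * (n.factorial : ℝ) ^ 2) < Real.exp (Real.exp 1 * z - 2 * n) := by
    have hfacpos : (0 : ℝ) < n.factorial := by exact_mod_cast n.factorial_pos
    have hstir : ((n : ℝ) / Real.exp 1) ^ (2 * n) ≤ (n.factorial : ℝ) ^ 2 := by
      have := pow_div_exp_le_factorial n
      calc ((n : ℝ) / Real.exp 1) ^ (2 * n) = (((n : ℝ) / Real.exp 1) ^ n) ^ 2 := by
            rw [← pow_mul, Nat.mul_comm]
        _ ≤ (n.factorial : ℝ) ^ 2 := by
            apply pow_le_pow_left₀ (by positivity) this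
    have hdenlt : ((n : ℝ) / Real.exp 1) ^ (2 * n) < (2 * n + 1) * (n.factorial : ℝ) ^ 2 := by
      have h1 : (1:ℝ) < 2 * n + 1 := by push_cast; linarith
      nlinarith [pow_pos (div_pos hnpos he) (2*n), sq_nonneg ((n.factorial : ℝ))]
    have hA : (0:ℝ) < ((2 * Real.pi * Fn) * R / (2 * c)) ^ (2 * n) := by positivity
    have step1 : ((2 * Real.pi * Fn) * R / (2 * c)) ^ (2 * n) /
        ((2 * n + 1) * (n.factorial : ℝ) ^ 2) <
        ((2 * Real.pi * Fn) * R / (2 * c)) ^ (2 * n) / ((n : ℝ) / Real.exp 1) ^ (2 * n) := by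
      apply div_lt_div_of_pos_left hA (by positivity) hdenlt
    have hrw : ((2 * Real.pi * Fn) * R / (2 * c)) ^ (2 * n) / ((n : ℝ) / Real.exp 1) ^ (2 * n)
        = (Real.exp 1 * z / (2 * n)) ^ (2 * n) := by
      rw [← div_pow]
      congr 1
      field_simp [hz]
      rw [hz]; field_simp
    have step2 : (Real.exp 1 * z / (2 * n)) ^ (2 * n) ≤ Real.exp (Real.exp 1 * z - 2 * n) := by
      set x : ℝ := Real.exp 1 * z / (2 * n) with hx
      have hxpos : 0 < x := by positivity
      have hle : x ≤ Real.exp (x - 1) := by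
        have := Real.add_one_le_exp (x - 1); linarith
      have hne : (n:ℝ) ≠ 0 := hnpos.ne'
      calc x ^ (2 * n) ≤ (Real.exp (x - 1)) ^ (2 * n) :=
            pow_le_pow_left₀ hxpos.le hle _
        _ = Real.exp (((2 * n : ℕ) : ℝ) * (x - 1)) := (Real.exp_nat_mul _ _).symm
        _ = Real.exp (Real.exp 1 * z - 2 * n) := by
            congr 1
            rw [hx]
            push_cast
            field_simp
    calc ((2 * Real.pi * Fn) * R / (2 * c)) ^ (2 * n) / ((2 * n + 1) * (n.factorial : ℝ) ^ 2)
        < ((2 * Real.pi * Fn) * R / (2 * c)) ^ (2 * n) / ((n : ℝ) / Real.exp 1) ^ (2 * n) := step1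
      _ = (Real.exp 1 * z / (2 * n)) ^ (2 * n) := hrw
      _ ≤ Real.exp (Real.exp 1 * z - 2 * n) := step2
  have hexpeq : -(2 * (n:ℝ) - 2 * Real.pi * Real.exp 1 * Fn * R / c) = Real.exp 1 * z - 2 * n := by
    rw [hz]; ring
  have main : snrn < SNRmax * Real.exp (-(2 * n - 2 * Real.pi * Real.exp 1 * Fn * R / c)) := by
    rw [hexpeq]
    calc snrn ≤ SNRmax * ((2 * Real.pi * Fn) * R / (2 * c)) ^ (2 * n) /
        ((2 * n + 1) * (n.factorial : ℝ) ^ 2) := hbound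
      _ = SNRmax * (((2 * Real.pi * Fn) * R / (2 * c)) ^ (2 * n) /
        ((2 * n + 1) * (n.factorial : ℝ) ^ 2)) := by ring
      _ < SNRmax * Real.exp (Real.exp 1 * z - 2 * n) := by
        exact mul_lt_mul_of_pos_left key hS
  refine ⟨main, ?_⟩
  intro γ hγ hγle
  have h1 : γ < SNRmax * Real.exp (Real.exp 1 * z - 2 * n) := by
    rw [← hexpeq]; exact lt_of_le_of_lt hγle main
  have h2 : γ / SNRmax < Real.exp (Real.exp 1 * z - 2 * n) := by
    rw [div_lt_iff₀ hS]; linarith [h1]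
  have h3 : Real.log (γ / SNRmax) < Real.exp 1 * z - 2 * n := by
    have := Real.log_lt_log (by positivity) h2
    rwa [Real.log_exp] at this
  -- rearrange
  have hden : (0:ℝ) < 2 * Real.exp 1 * Real.pi * R := by positivity
  rw [ge_iff_le]
  have hFz : Real.exp 1 * z = 2 * Real.exp 1 * Real.pi * R * Fn / c := by
    rw [hz]; ring
  have h4 : 2 * Real.exp 1 * Real.pi * R * Fn / c > 2 * n + Real.log (γ / SNRmax) := by
    rw [← hFz]; linarith
  have h5 : (2 * (n:ℝ) + Real.log (γ / SNRmax)) * c < 2 * Real.exp 1 * Real.pi * R * Fn := by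
    exact (lt_div_iff₀ hc).mp h4
  have h6 : (n:ℝ) * c / (Real.exp 1 * Real.pi * R) +
      c / (2 * Real.exp 1 * Real.pi * R) * Real.log (γ / SNRmax)
      = (2 * (n:ℝ) + Real.log (γ / SNRmax)) * c / (2 * Real.exp 1 * Real.pi * R) := by
    field_simp
  have h7 : (2 * (n:ℝ) + Real.log (γ / SNRmax)) * c / (2 * Real.exp 1 * Real.pi * R) < Fn := by
    rw [div_lt_iff₀ hden]
    linarith [h5]
  rw [h6]
  exact h7.le
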